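/- For every 3-CNF formula φ over the variables p_0,…,p_{n−1} with exactly m clauses (n, m ≥ 1), the pair (s_{n,m}, enc(φ)) belongs to τ_{OI,M_sat} if and only if φ is satisfiable. -/

import Mathlib

namespace MttF

/-- Finite ordered trees over a label type `α`. -/
inductive RTree (α : Type) : Type
  | node : α → List (RTree α) → RTree α

namespace RTree

variable {α β : Type}

/-- The root label of a tree. -/
def label : RTree α → α
  | node a _ => a

/-- The list of immediate subtrees of a tree. -/
def children : RTree α → List (RTree α)
  | node _ ts => ts

/-- Relabelling of trees. -/
def map (f : α → β) : RTree α → RTree β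
  | node a ts => node (f a) (ts.attach.map (fun x => map f x.1))
decreasing_by
  have := List.sizeOf_lt_of_mem x.2
  simp only [node.sizeOf_spec]
  omega

/-- A tree is well-formed with respect to a rank function if every node labeled
by a rank-`k` symbol has exactly `k` children. `T_Σ` is the set of well-formed
trees over `Σ`. -/
inductive Wf (rk : α → ℕ) : RTree α → Prop
  | node {a : α} {ts : List (RTree α)} :
      ts.length = rk a → (∀ t ∈ ts, Wf rk t) → Wf rk (node a ts)

/-- `Subtree u t` holds iff `u` is a subtree of `t` (rooted at some node of `t`). -/
inductive Subtree : RTree α → RTree α → Prop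
  | refl (t : RTree α) : Subtree t t
  | step {u c : RTree α} {a : α} {ts : List (RTree α)} :
      c ∈ ts → Subtree u c → Subtree u (node a ts)

end RTree

/-- Labels for output trees with parameters: trees over `Δ ∪ Y`. -/
inductive OLab (Δ : Type) : Type
  | out (d : Δ)
  | param (i : ℕ)

/-- Labels for right-hand sides of mtt rules: trees over `Δ ∪ (Q × X) ∪ Y`
(the second component of a call is the index of the input variable `x`). -/
inductive RLab (Δ Q : Type) : Type
  | out (d : Δ)
  | call (q : Q) (x : ℕ)
  | param (i : ℕ)

/-- Labels for "semantic" trees over `Δ ∪ (Q × T_Σ) ∪ Y`. -/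
inductive SLab (Γ Δ Q : Type) : Type
  | out (d : Δ)
  | call (q : Q) (s : RTree Γ)
  | param (i : ℕ)

/-- Trees over `Δ ∪ Y`. -/
abbrev OT (Δ : Type) := RTree (OLab Δ)
/-- Right-hand side trees over `Δ ∪ (Q × X) ∪ Y`. -/
abbrev Rhs (Δ Q : Type) := RTree (RLab Δ Q)
/-- Trees over `Δ ∪ (Q × T_Σ) ∪ Y`. -/
abbrev ST (Γ Δ Q : Type) := RTree (SLab Γ Δ Q)

/-- First-order substitution `x_i := ss_i` on a label of a right-hand side
(indices are 0-based; for well-formed rules the index is always in range). -/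
def RLab.subst {Γ Δ Q : Type} (ss : List (RTree Γ)) : RLab Δ Q → SLab Γ Δ Q
  | .out d => .out d
  | .param i => .param i
  | .call q x =>
    match ss[x]? with
    | some s => .call q s
    | none => .param x

/-- `r[x_1/s_1, …, x_k/s_k]`. -/
def substX {Γ Δ Q : Type} (ss : List (RTree Γ)) (r : Rhs Δ Q) : ST Γ Δ Q :=
  r.map (RLab.subst ss)

/-- Second-order (parameter) substitution `t[y_1/ts_1, …, y_n/ts_n]`
(`y` indices are 0-based). -/
def substY {Δ : Type} (ts : List (OT Δ)) : OT Δ → OT Δ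
  | .node (.param i) _ => ts.getD i (.node (.param i) [])
  | .node (.out d) us => .node (.out d) (us.attach.map (fun x => substY ts x.1))
decreasing_by
  have := List.sizeOf_lt_of_mem x.2
  simp only [RTree.node.sizeOf_spec]
  omega

/-- The embedding of `T_Δ` into the trees over `Δ ∪ Y`. -/
def embed {Δ : Type} (t : RTree Δ) : OT Δ := t.map OLab.out

variable {Γ Δ Q : Type}

/-- IO (call-by-value, inside-out) semantics: `SemIO rsel u t` holds iff
`t ∈ ⟦u⟧_IO`.  The rules of the transducer are given by a selector
`rsel q σ ss`: the set of right-hand sides of the `⟨q,σ⟩`-rules that are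
applicable when the children of the current input node are `ss` (for a plain
mtt this does not depend on `ss`, cf. `plainSel`). -/
inductive SemIO (rsel : Q → Γ → List (RTree Γ) → Set (Rhs Δ Q)) :
    ST Γ Δ Q → OT Δ → Prop
  | param (i : ℕ) :
      SemIO rsel (.node (.param i) []) (.node (.param i) [])
  | out {d : Δ} {us : List (ST Γ Δ Q)} {ts : List (OT Δ)}
      (hlen : ts.length = us.length)
      (h : ∀ i : Fin us.length, SemIO rsel (us.get i) (ts.get (i.cast hlen.symm))) :
      SemIO rsel (.node (.out d) us) (.node (.out d) ts)
  | call {q : Q} {σ : Γ} {ss : List (RTree Γ)} {us : List (ST Γ Δ Q)}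
      {r : Rhs Δ Q} {t₀ : OT Δ} {ts : List (OT Δ)}
      (hr : r ∈ rsel q σ ss)
      (h₀ : SemIO rsel (substX ss r) t₀)
      (hlen : ts.length = us.length)
      (h : ∀ i : Fin us.length, SemIO rsel (us.get i) (ts.get (i.cast hlen.symm))) :
      SemIO rsel (.node (.call q (.node σ ss)) us) (substY ts t₀)

mutual
/-- OI (call-by-name, outside-in) semantics: `SemOI rsel u t` holds iff
`t ∈ ⟦u⟧_OI`. -/
inductive SemOI (rsel : Q → Γ → List (RTree Γ) → Set (Rhs Δ Q)) :
    ST Γ Δ Q → OT Δ → Prop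
  | param (i : ℕ) :
      SemOI rsel (.node (.param i) []) (.node (.param i) [])
  | out {d : Δ} {us : List (ST Γ Δ Q)} {ts : List (OT Δ)}
      (hlen : ts.length = us.length)
      (h : ∀ i : Fin us.length, SemOI rsel (us.get i) (ts.get (i.cast hlen.symm))) :
      SemOI rsel (.node (.out d) us) (.node (.out d) ts)
  | call {q : Q} {σ : Γ} {ss : List (RTree Γ)} {us : List (ST Γ Δ Q)}
      {r : Rhs Δ Q} {t₀ : OT Δ} {t : OT Δ}
      (hr : r ∈ rsel q σ ss)
      (h₀ : SemOI rsel (substX ss r) t₀)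
      (hs : OISub rsel us t₀ t) :
      SemOI rsel (.node (.call q (.node σ ss)) us) t

/-- OI-substitution: `OISub rsel us t₀ t` holds iff `t ∈ (t₀ ←_OI (⟦us_1⟧_OI, …, ⟦us_n⟧_OI))`,
i.e. `t` is obtained from `t₀` by independently replacing every occurrence of a parameter
`y_i` by some member of `⟦us_i⟧_OI`. -/
inductive OISub (rsel : Q → Γ → List (RTree Γ) → Set (Rhs Δ Q)) :
    List (ST Γ Δ Q) → OT Δ → OT Δ → Prop
  | param {us : List (ST Γ Δ Q)} {i : ℕ} {t : OT Δ}
      (h : i < us.length) (hsem : SemOI rsel (us.get ⟨i, h⟩) t) :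
      OISub rsel us (.node (.param i) []) t
  | out {us : List (ST Γ Δ Q)} {d : Δ} {ts ts' : List (OT Δ)}
      (hlen : ts'.length = ts.length)
      (h : ∀ i : Fin ts.length, OISub rsel us (ts.get i) (ts'.get (i.cast hlen.symm))) :
      OISub rsel us (.node (.out d) ts) (.node (.out d) ts')
end

/-- The rule selector of a plain mtt: the applicable rules do not depend on the
child subtrees of the current input node. -/
def plainSel (rules : Q → Γ → Set (Rhs Δ Q)) :
    Q → Γ → List (RTree Γ) → Set (Rhs Δ Q) :=
  fun q σ _ => rules q σ

/-- The translation `τ_{IO,M} ⊆ T_Σ × T_Δ` realized in IO mode. -/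
def tauIO (rankΓ : Γ → ℕ) (rankΔ : Δ → ℕ)
    (rsel : Q → Γ → List (RTree Γ) → Set (Rhs Δ Q)) (q₀ : Q) :
    Set (RTree Γ × RTree Δ) :=
  {p | p.1.Wf rankΓ ∧ p.2.Wf rankΔ ∧
       SemIO rsel (.node (.call q₀ p.1) []) (embed p.2)}

/-- The translation `τ_{OI,M} ⊆ T_Σ × T_Δ` realized in OI mode. -/
def tauOI (rankΓ : Γ → ℕ) (rankΔ : Δ → ℕ)
    (rsel : Q → Γ → List (RTree Γ) → Set (Rhs Δ Q)) (q₀ : Q) :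
    Set (RTree Γ × RTree Δ) :=
  {p | p.1.Wf rankΓ ∧ p.2.Wf rankΔ ∧
       SemOI rsel (.node (.call q₀ p.1) []) (embed p.2)}

/-- Well-formedness of a right-hand side of a rule of an mtt whose current
input symbol has rank `k` and whose current state has rank `m`: output symbols
have the correct number of children, state calls `⟨q', x_i⟩` have `rank q'`
children and `i < k`, and parameters `y_j` satisfy `j < m`. -/
inductive RhsWf (rankΔ : Δ → ℕ) (rankQ : Q → ℕ) (k m : ℕ) : Rhs Δ Q → Prop
  | out {d : Δ} {ts : List (Rhs Δ Q)}
      (hlen : ts.length = rankΔ d) (h : ∀ t ∈ ts, RhsWf rankΔ rankQ k m t) :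
      RhsWf rankΔ rankQ k m (.node (.out d) ts)
  | call {q : Q} {x : ℕ} {ts : List (Rhs Δ Q)}
      (hx : x < k) (hlen : ts.length = rankQ q)
      (h : ∀ t ∈ ts, RhsWf rankΔ rankQ k m t) :
      RhsWf rankΔ rankQ k m (.node (.call q x) ts)
  | param {i : ℕ} (hi : i < m) : RhsWf rankΔ rankQ k m (.node (.param i) [])

/-- Well-formedness of a tree over `Δ ∪ (Q × T_Σ) ∪ Y`. -/
inductive STWf (rankΓ : Γ → ℕ) (rankΔ : Δ → ℕ) (rankQ : Q → ℕ) : ST Γ Δ Q → Prop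
  | out {d : Δ} {ts : List (ST Γ Δ Q)}
      (hlen : ts.length = rankΔ d) (h : ∀ t ∈ ts, STWf rankΓ rankΔ rankQ t) :
      STWf rankΓ rankΔ rankQ (.node (.out d) ts)
  | call {q : Q} {s : RTree Γ} {ts : List (ST Γ Δ Q)}
      (hs : s.Wf rankΓ) (hlen : ts.length = rankQ q)
      (h : ∀ t ∈ ts, STWf rankΓ rankΔ rankQ t) :
      STWf rankΓ rankΔ rankQ (.node (.call q s) ts)
  | param (i : ℕ) : STWf rankΓ rankΔ rankQ (.node (.param i) [])

/-- A tree over `Δ ∪ (Q × T_Σ) ∪ Y` is parameter-free if no `y_i` occurs in it. -/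
inductive NoParam : ST Γ Δ Q → Prop
  | node {l : SLab Γ Δ Q} {ts : List (ST Γ Δ Q)}
      (hl : ∀ i : ℕ, l ≠ .param i) (h : ∀ t ∈ ts, NoParam t) :
      NoParam (.node l ts)

/-- A macro tree transducer `M = (Q, Σ, Δ, q₀, R)`.  The alphabets `Γ` (input),
`Δ` (output) and the set `Q` of states are ranked; `q₀` has rank `0`; `rules q σ`
is the (finite) set `R_{q,σ}` of right-hand sides of the `⟨q,σ⟩`-rules, and every
right-hand side is a well-formed tree over `Δ ∪ (Q × X_k) ∪ Y_m`. -/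
structure MTT (Γ Δ Q : Type) where
  rankΓ : Γ → ℕ
  rankΔ : Δ → ℕ
  rankQ : Q → ℕ
  q₀ : Q
  q₀_rank : rankQ q₀ = 0
  rules : Q → Γ → Set (Rhs Δ Q)
  rules_fin : ∀ q σ, (rules q σ).Finite
  rules_wf : ∀ q σ, ∀ r ∈ rules q σ, RhsWf rankΔ rankQ (rankΓ σ) (rankQ q) r

/-- The rule selector of a plain mtt. -/
def MTT.sel (M : MTT Γ Δ Q) : Q → Γ → List (RTree Γ) → Set (Rhs Δ Q) :=
  plainSel M.rules

end MttF
namespace MttF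

/-- Input alphabet of `M_sat`: `a` (rank 1), `b` (rank 3), `c` (rank 1), `d` (rank 0). -/
inductive GS : Type | a | b | c | d

def rkGS : GS → ℕ | .a => 1 | .b => 3 | .c => 1 | .d => 0

/-- Output alphabet of `M_sat`: `∧` (rank 2), `∨` (rank 3), `¬` (rank 1),
`v` (rank 1), `e` (rank 0). -/
inductive DS : Type | and | or | not | v | e

def rkDS : DS → ℕ | .and => 2 | .or => 3 | .not => 1 | .v => 1 | .e => 0

/-- States of `M_sat`: `q0` (rank 0), `q` (rank 3, parameters `y_v, y_t, y_f`),
`qc` (rank 2). -/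
inductive QS : Type | q0 | q | qc

def rkQS : QS → ℕ | .q0 => 0 | .q => 3 | .qc => 2

/-- The parameter `y_i` (`y 0 = y_v`, `y 1 = y_t`, `y 2 = y_f`). -/
def yS (i : ℕ) : Rhs DS QS := .node (.param i) []

def oeS : Rhs DS QS := .node (.out .e) []

/-- Either `y_t` (for `true`) or `y_f` (for `false`). -/
def ytf : Bool → Rhs DS QS
  | true => yS 1
  | false => yS 2

/-- The two `⟨q0,a⟩`-rules: `⟨q0, a(x₁)⟩ → ⟨q, x₁⟩(v(e), e, ¬(e))` and
`⟨q0, a(x₁)⟩ → ⟨q, x₁⟩(v(e), ¬(e), e)`. -/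
def q0Rule : Bool → Rhs DS QS
  | true => .node (.call .q 0) [.node (.out .v) [oeS], oeS, .node (.out .not) [oeS]]
  | false => .node (.call .q 0) [.node (.out .v) [oeS], .node (.out .not) [oeS], oeS]

/-- The two `⟨q,b⟩`-rules:
`⟨q, b(x₁,x₂,x₃)⟩(y_v,y_t,y_f) → ⟨q, x₁⟩(v(y_v), ⟨qc,x₂⟩(y_t, y_v), ⟨qc,x₃⟩(y_f, ¬(y_v)))`
and
`⟨q, b(x₁,x₂,x₃)⟩(y_v,y_t,y_f) → ⟨q, x₁⟩(v(y_v), ⟨qc,x₂⟩(y_t, ¬(y_v)), ⟨qc,x₃⟩(y_f, y_v))`. -/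
def qbRule : Bool → Rhs DS QS
  | true => .node (.call .q 0) [.node (.out .v) [yS 0],
      .node (.call .qc 1) [yS 1, yS 0],
      .node (.call .qc 2) [yS 2, .node (.out .not) [yS 0]]]
  | false => .node (.call .q 0) [.node (.out .v) [yS 0],
      .node (.call .qc 1) [yS 1, .node (.out .not) [yS 0]],
      .node (.call .qc 2) [yS 2, yS 0]]

/-- The `⟨q,c⟩`-rule for a literal choice `(z₁,z₂,z₃) ∈ {y_t,y_f}³`:
`⟨q, c(x₁)⟩(y_v,y_t,y_f) → ∧(∨(z₁,z₂,z₃), ⟨q, x₁⟩(y_v,y_t,y_f))`. -/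
def qcRule (b1 b2 b3 : Bool) : Rhs DS QS :=
  .node (.out .and) [.node (.out .or) [ytf b1, ytf b2, ytf b3],
    .node (.call .q 0) [yS 0, yS 1, yS 2]]

/-- The `⟨q,d⟩`-rule for a literal choice: `⟨q, d⟩(y_v,y_t,y_f) → ∨(z₁,z₂,z₃)`. -/
def qdRule (b1 b2 b3 : Bool) : Rhs DS QS :=
  .node (.out .or) [ytf b1, ytf b2, ytf b3]

/-- The rules of `M_sat`; the `⟨q,c⟩`- and `⟨q,d⟩`-rules range over the seven
triples in `{y_t,y_f}³` other than `(y_f,y_f,y_f)`, and the `⟨qc,d⟩`-rules are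
`⟨qc, d⟩(y₁,y₂) → y₁` and `⟨qc, d⟩(y₁,y₂) → y₂`. -/
def rulesSat : QS → GS → Set (Rhs DS QS)
  | .q0, .a => {r | ∃ pos : Bool, r = q0Rule pos}
  | .q, .b => {r | ∃ pos : Bool, r = qbRule pos}
  | .qc, .d => {.node (.param 0) [], .node (.param 1) []}
  | .q, .c => {r | ∃ b1 b2 b3 : Bool, (b1 || b2 || b3) = true ∧ r = qcRule b1 b2 b3}
  | .q, .d => {r | ∃ b1 b2 b3 : Bool, (b1 || b2 || b3) = true ∧ r = qdRule b1 b2 b3}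
  | _, _ => ∅

/-- A literal: `(true, i)` is `p_i` and `(false, i)` is `¬ p_i`. -/
abbrev Lit := Bool × ℕ
/-- A clause: a disjunction of exactly three literals. -/
abbrev Clause := Lit × Lit × Lit
/-- A 3-CNF formula: a (nonempty) list of clauses `C_1 ∧ ⋯ ∧ C_m`. -/
abbrev CNF := List Clause

/-- `φ` is a 3-CNF formula over the variables `p_0, …, p_{n−1}` with exactly
`m` clauses. -/
def goodCNF (n m : ℕ) (φ : CNF) : Prop :=
  φ.length = m ∧ ∀ cl ∈ φ, cl.1.2 < n ∧ cl.2.1.2 < n ∧ cl.2.2.2 < n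

/-- A literal is true under an assignment `α`. -/
def evalLit (α : ℕ → Bool) (l : Lit) : Prop := α l.2 = l.1

/-- Satisfiability of a 3-CNF formula. -/
def Satisfiable (φ : CNF) : Prop :=
  ∃ α : ℕ → Bool, ∀ cl ∈ φ, evalLit α cl.1 ∨ evalLit α cl.2.1 ∨ evalLit α cl.2.2

/-- The encoding `v^i(e)` of the variable `p_i`. -/
def varE : ℕ → RTree DS
  | 0 => .node .e []
  | i+1 => .node .v [varE i]

/-- The encoding of a literal. -/
def litE : Lit → RTree DS
  | (true, i) => varE i
  | (false, i) => .node .not [varE i]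

/-- The encoding `∨(enc l₁, enc l₂, enc l₃)` of a clause. -/
def clauseE : Clause → RTree DS
  | (l1, l2, l3) => .node .or [litE l1, litE l2, litE l3]

/-- The (right-nested) encoding of a 3-CNF formula. -/
def encF : CNF → RTree DS
  | [] => .node .e []
  | [cl] => clauseE cl
  | cl :: cls => .node .and [clauseE cl, encF cls]

/-- `c^k(d)`. -/
def cIter : ℕ → RTree GS
  | 0 => .node .d []
  | k+1 => .node .c [cIter k]

/-- `t_{i+1} = b(t_i, d, d)`. -/
def bIter : ℕ → RTree GS → RTree GS
  | 0, t => t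
  | k+1, t => .node .b [bIter k t, .node .d [], .node .d []]

/-- The input tree `s_{n,m} = a(t_{n−1})` with `t_0 = c^{m−1}(d)` and
`t_{i+1} = b(t_i, d, d)`. -/
def sNM (n m : ℕ) : RTree GS := .node .a [bIter (n-1) (cIter (m-1))]

set_option linter.dupNamespace false
set_option maxHeartbeats 1000000
open RTree

theorem RTree.ind' {α : Type} {P : RTree α → Prop}
    (h : ∀ a ts, (∀ t ∈ ts, P t) → P (node a ts)) : ∀ t, P t
  | node a ts => h a ts (fun t ht => have := List.sizeOf_lt_of_mem ht; RTree.ind' h t)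
decreasing_by simp only [RTree.node.sizeOf_spec]; omega

variable {Γ Δ Q : Type} {rsel : Q → Γ → List (RTree Γ) → Set (Rhs Δ Q)}

lemma map_node {α β : Type} (f : α → β) (a : α) (ts : List (RTree α)) :
    RTree.map f (node a ts) = node (f a) (ts.map (RTree.map f)) := by
  rw [RTree.map]; simp

lemma embed_node {d : Δ} {ts : List (RTree Δ)} :
    embed (node d ts) = node (OLab.out d) (ts.map embed) := map_node _ _ _

lemma semOI_param_iff {i : ℕ} {t : OT Δ} :
    SemOI rsel (.node (.param i) []) t ↔ t = .node (.param i) [] := by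
  constructor
  · intro h; cases h; rfl
  · rintro rfl; exact .param i

lemma semOI_out_iff {d : Δ} {us : List (ST Γ Δ Q)} {t : OT Δ} :
    SemOI rsel (.node (.out d) us) t ↔
      ∃ ts, t = .node (.out d) ts ∧ List.Forall₂ (SemOI rsel) us ts := by
  constructor
  · intro h
    cases h with
    | out hlen hf =>
      exact ⟨_, rfl, List.forall₂_iff_get.2 ⟨hlen.symm, fun i h1 h2 => hf ⟨i, h1⟩⟩⟩
  · rintro ⟨ts, rfl, hf⟩
    obtain ⟨hlen, hg⟩ := List.forall₂_iff_get.1 hf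
    exact SemOI.out hlen.symm (fun i => hg i i.isLt (by omega))

lemma oisub_out_iff {us : List (ST Γ Δ Q)} {d : Δ} {ts : List (OT Δ)} {t : OT Δ} :
    OISub rsel us (.node (.out d) ts) t ↔
      ∃ ts', t = .node (.out d) ts' ∧ List.Forall₂ (OISub rsel us) ts ts' := by
  constructor
  · intro h
    cases h with
    | out hlen hf =>
      exact ⟨_, rfl, List.forall₂_iff_get.2 ⟨hlen.symm, fun i h1 h2 => hf ⟨i, h1⟩⟩⟩
  · rintro ⟨ts', rfl, hf⟩
    obtain ⟨hlen, hg⟩ := List.forall₂_iff_get.1 hf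
    exact OISub.out hlen.symm (fun i => hg i i.isLt (by omega))

lemma oisub_param_iff {us : List (ST Γ Δ Q)} {i : ℕ} {t : OT Δ} :
    OISub rsel us (.node (.param i) []) t ↔
      ∃ h : i < us.length, SemOI rsel (us.get ⟨i, h⟩) t := by
  constructor
  · intro h; cases h with
    | param h hs => exact ⟨h, hs⟩
  · rintro ⟨h, hs⟩; exact .param h hs

lemma semOI_call_iff {q : Q} {σ : Γ} {ss : List (RTree Γ)} {us : List (ST Γ Δ Q)} {t : OT Δ} :
    SemOI rsel (.node (.call q (.node σ ss)) us) t ↔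
      ∃ r ∈ rsel q σ ss, ∃ t₀, SemOI rsel (substX ss r) t₀ ∧ OISub rsel us t₀ t := by
  constructor
  · intro h; cases h with
    | call hr h₀ hs => exact ⟨_, hr, _, h₀, hs⟩
  · rintro ⟨r, hr, t₀, h₀, hs⟩; exact .call hr h₀ hs

lemma oisub_nil {t₀ t : OT Δ} (h : OISub rsel [] t₀ t) : t = t₀ := by
  induction t₀ using RTree.ind' generalizing t with
  | h a ts ih =>
    cases h with
    | param hlt => simp at hlt
    | out hlen hf =>
      congr 1
      apply List.ext_get (by omega)
      intro i h1 h2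
      exact ih (ts.get ⟨i, h2⟩) (ts.get_mem ⟨i, h2⟩) (hf ⟨i, h2⟩)

/-- arity-specific corollaries -/
lemma semOI_out0 {d : Δ} {t : OT Δ} :
    SemOI rsel (.node (.out d) []) t ↔ t = .node (.out d) [] := by
  rw [semOI_out_iff]
  constructor
  · rintro ⟨ts, rfl, hf⟩; cases hf; rfl
  · rintro rfl; exact ⟨[], rfl, .nil⟩

lemma semOI_out1 {d : Δ} {u1 : ST Γ Δ Q} {t : OT Δ} :
    SemOI rsel (.node (.out d) [u1]) t ↔
      ∃ t1, SemOI rsel u1 t1 ∧ t = .node (.out d) [t1] := by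
  rw [semOI_out_iff]
  constructor
  · rintro ⟨ts, rfl, hf⟩
    cases hf with | cons h1 hf => cases hf; exact ⟨_, h1, rfl⟩
  · rintro ⟨t1, h1, rfl⟩; exact ⟨[t1], rfl, .cons h1 .nil⟩

lemma semOI_out2 {d : Δ} {u1 u2 : ST Γ Δ Q} {t : OT Δ} :
    SemOI rsel (.node (.out d) [u1, u2]) t ↔
      ∃ t1 t2, SemOI rsel u1 t1 ∧ SemOI rsel u2 t2 ∧ t = .node (.out d) [t1, t2] := by
  rw [semOI_out_iff]
  constructor
  · rintro ⟨ts, rfl, hf⟩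
    cases hf with | cons h1 hf => cases hf with | cons h2 hf => cases hf; exact ⟨_, _, h1, h2, rfl⟩
  · rintro ⟨t1, t2, h1, h2, rfl⟩; exact ⟨[t1, t2], rfl, .cons h1 (.cons h2 .nil)⟩

lemma semOI_out3 {d : Δ} {u1 u2 u3 : ST Γ Δ Q} {t : OT Δ} :
    SemOI rsel (.node (.out d) [u1, u2, u3]) t ↔
      ∃ t1 t2 t3, SemOI rsel u1 t1 ∧ SemOI rsel u2 t2 ∧ SemOI rsel u3 t3 ∧
        t = .node (.out d) [t1, t2, t3] := by
  rw [semOI_out_iff]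
  constructor
  · rintro ⟨ts, rfl, hf⟩
    cases hf with | cons h1 hf => cases hf with | cons h2 hf => cases hf with
    | cons h3 hf => cases hf; exact ⟨_, _, _, h1, h2, h3, rfl⟩
  · rintro ⟨t1, t2, t3, h1, h2, h3, rfl⟩
    exact ⟨[t1, t2, t3], rfl, .cons h1 (.cons h2 (.cons h3 .nil))⟩

lemma oisub_out1 {us : List (ST Γ Δ Q)} {d : Δ} {s1 : OT Δ} {t : OT Δ} :
    OISub rsel us (.node (.out d) [s1]) t ↔
      ∃ t1, OISub rsel us s1 t1 ∧ t = .node (.out d) [t1] := by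
  rw [oisub_out_iff]
  constructor
  · rintro ⟨ts, rfl, hf⟩
    cases hf with | cons h1 hf => cases hf; exact ⟨_, h1, rfl⟩
  · rintro ⟨t1, h1, rfl⟩; exact ⟨[t1], rfl, .cons h1 .nil⟩

lemma oisub_out2 {us : List (ST Γ Δ Q)} {d : Δ} {s1 s2 : OT Δ} {t : OT Δ} :
    OISub rsel us (.node (.out d) [s1, s2]) t ↔
      ∃ t1 t2, OISub rsel us s1 t1 ∧ OISub rsel us s2 t2 ∧ t = .node (.out d) [t1, t2] := by
  rw [oisub_out_iff]
  constructor
  · rintro ⟨ts, rfl, hf⟩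
    cases hf with | cons h1 hf => cases hf with | cons h2 hf => cases hf; exact ⟨_, _, h1, h2, rfl⟩
  · rintro ⟨t1, t2, h1, h2, rfl⟩; exact ⟨[t1, t2], rfl, .cons h1 (.cons h2 .nil)⟩

lemma oisub_out3 {us : List (ST Γ Δ Q)} {d : Δ} {s1 s2 s3 : OT Δ} {t : OT Δ} :
    OISub rsel us (.node (.out d) [s1, s2, s3]) t ↔
      ∃ t1 t2 t3, OISub rsel us s1 t1 ∧ OISub rsel us s2 t2 ∧ OISub rsel us s3 t3 ∧
        t = .node (.out d) [t1, t2, t3] := by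
  rw [oisub_out_iff]
  constructor
  · rintro ⟨ts, rfl, hf⟩
    cases hf with | cons h1 hf => cases hf with | cons h2 hf => cases hf with
    | cons h3 hf => cases hf; exact ⟨_, _, _, h1, h2, h3, rfl⟩
  · rintro ⟨t1, t2, t3, h1, h2, h3, rfl⟩
    exact ⟨[t1, t2, t3], rfl, .cons h1 (.cons h2 (.cons h3 .nil))⟩


open RTree

variable {Γ Δ Q : Type} {rsel : Q → Γ → List (RTree Γ) → Set (Rhs Δ Q)}

lemma forall₂_comp {α β γ : Type*} {R : α → β → Prop} {S : β → γ → Prop}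
    {l₁ : List α} {l₃ : List γ} :
    (∃ l₂, List.Forall₂ R l₁ l₂ ∧ List.Forall₂ S l₂ l₃) ↔
      List.Forall₂ (fun a c => ∃ b, R a b ∧ S b c) l₁ l₃ := by
  constructor
  · rintro ⟨l₂, h1, h2⟩
    induction h1 generalizing l₃ with
    | nil => cases h2; exact .nil
    | cons hR h1 ih =>
      cases h2 with
      | cons hS h2 => exact .cons ⟨_, hR, hS⟩ (ih h2)
  · intro h
    induction h with
    | nil => exact ⟨[], .nil, .nil⟩
    | cons hac h ih =>
      obtain ⟨b, hR, hS⟩ := hac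
      obtain ⟨l₂, h1, h2⟩ := ih
      exact ⟨b :: l₂, .cons hR h1, .cons hS h2⟩

lemma forall₂_imp_mem {α β : Type*} {R S : α → β → Prop} {l₁ : List α} {l₂ : List β}
    (h : List.Forall₂ R l₁ l₂) (himp : ∀ a ∈ l₁, ∀ b, R a b → S a b) :
    List.Forall₂ S l₁ l₂ := by
  induction h with
  | nil => exact .nil
  | cons hR h ih =>
    exact .cons (himp _ List.mem_cons_self _ hR)
      (ih (fun a ha b => himp a (List.mem_cons_of_mem _ ha) b))

lemma oisub_comp {vs ws us : List (ST Γ Δ Q)}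
    (hlen : vs.length = ws.length)
    (hcomp : ∀ (i : ℕ) (h : i < vs.length) (t' : OT Δ),
      (∃ x, SemOI rsel (vs.get ⟨i, h⟩) x ∧ OISub rsel us x t') ↔
        SemOI rsel (ws.get ⟨i, hlen ▸ h⟩) t') :
    ∀ (t₀ t : OT Δ),
      ((∃ t₁, OISub rsel vs t₀ t₁ ∧ OISub rsel us t₁ t) ↔ OISub rsel ws t₀ t) := by
  intro t₀
  induction t₀ using RTree.ind' with
  | h a ts ih =>
    intro t
    match a, ts with
    | .param i, [] =>
      constructor
      · rintro ⟨t₁, h1, h2⟩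
        rw [oisub_param_iff] at h1 ⊢
        obtain ⟨h, hs⟩ := h1
        exact ⟨hlen ▸ h, (hcomp i h t).1 ⟨t₁, hs, h2⟩⟩
      · intro h
        rw [oisub_param_iff] at h
        obtain ⟨h, hs⟩ := h
        have h' : i < vs.length := hlen ▸ h
        obtain ⟨x, hx, hsub⟩ := (hcomp i h' t).2 hs
        exact ⟨x, oisub_param_iff.2 ⟨h', hx⟩, hsub⟩
    | .param i, (x :: xs) =>
      constructor
      · rintro ⟨t₁, h1, h2⟩; cases h1
      · intro h; cases h
    | .out d, ts =>
      constructor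
      · rintro ⟨t₁, h1, h2⟩
        rw [oisub_out_iff] at h1
        obtain ⟨ts₂, rfl, hf2⟩ := h1
        rw [oisub_out_iff] at h2 ⊢
        obtain ⟨ts₃, rfl, hf3⟩ := h2
        refine ⟨ts₃, rfl, ?_⟩
        have := forall₂_comp.1 ⟨ts₂, hf2, hf3⟩
        exact forall₂_imp_mem this (fun a ha b hab => (ih a ha b).1 hab)
      · intro h
        rw [oisub_out_iff] at h
        obtain ⟨ts₃, rfl, hf3⟩ := h
        have : List.Forall₂ (fun a c => ∃ b, OISub rsel vs a b ∧ OISub rsel us b c) ts ts₃ :=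
          forall₂_imp_mem hf3 (fun a ha b hab => (ih a ha b).2 hab)
        obtain ⟨ts₂, hf2, hf2'⟩ := forall₂_comp.2 this
        exact ⟨.node (.out d) ts₂, oisub_out_iff.2 ⟨ts₂, rfl, hf2⟩,
          oisub_out_iff.2 ⟨ts₃, rfl, hf2'⟩⟩

lemma fuse_gen {q : Q} {σ : Γ} {ss : List (RTree Γ)} {vs ws us : List (ST Γ Δ Q)} {t : OT Δ}
    (hlen : vs.length = ws.length)
    (hcomp : ∀ (i : ℕ) (h : i < vs.length) (t' : OT Δ),
      (∃ x, SemOI rsel (vs.get ⟨i, h⟩) x ∧ OISub rsel us x t') ↔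
        SemOI rsel (ws.get ⟨i, hlen ▸ h⟩) t') :
    (∃ t₀, SemOI rsel (.node (.call q (.node σ ss)) vs) t₀ ∧ OISub rsel us t₀ t) ↔
      SemOI rsel (.node (.call q (.node σ ss)) ws) t := by
  rw [semOI_call_iff]
  constructor
  · rintro ⟨t₀, h0, hsub⟩
    rw [semOI_call_iff] at h0
    obtain ⟨r, hr, t₁, h1, hs1⟩ := h0
    exact ⟨r, hr, t₁, h1, (oisub_comp hlen hcomp t₁ t).1 ⟨t₀, hs1, hsub⟩⟩
  · rintro ⟨r, hr, t₁, h1, hs⟩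
    obtain ⟨t₀, hs1, hsub⟩ := (oisub_comp hlen hcomp t₁ t).2 hs
    exact ⟨t₀, semOI_call_iff.2 ⟨r, hr, t₁, h1, hs1⟩, hsub⟩

/-- The embedding of output trees into semantic trees. -/
def stOf : RTree Δ → ST Γ Δ Q := RTree.map SLab.out

lemma stOf_node {d : Δ} {ts : List (RTree Δ)} :
    (stOf (RTree.node d ts) : ST Γ Δ Q) = RTree.node (SLab.out d) (ts.map stOf) := map_node _ _ _

lemma forall₂_map_iff {α β γ : Type*} {l : List α} {f : α → β} {g : α → γ}
    {R : β → γ → Prop} (h : ∀ a ∈ l, ∀ c, R (f a) c ↔ c = g a) :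
    ∀ {ts : List γ}, List.Forall₂ R (l.map f) ts ↔ ts = l.map g := by
  induction l with
  | nil => intro ts; constructor
           · intro hf; cases hf; rfl
           · rintro rfl; exact .nil
  | cons a l ih =>
    intro ts
    constructor
    · intro hf
      rw [List.map_cons] at hf
      cases hf with
      | cons h1 hf =>
        rw [(h a List.mem_cons_self _).1 h1,
          (ih (fun a ha c => h a (List.mem_cons_of_mem _ ha) c)).1 hf]
        rfl
    · rintro rfl
      exact .cons ((h a List.mem_cons_self _).2 rfl)
        ((ih (fun a ha c => h a (List.mem_cons_of_mem _ ha) c)).2 rfl)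

lemma sem_stOf {s : RTree Δ} {t : OT Δ} :
    SemOI rsel (stOf s : ST Γ Δ Q) t ↔ t = embed s := by
  induction s using RTree.ind' generalizing t with
  | h d ts ih =>
    rw [stOf_node, semOI_out_iff, embed_node]
    constructor
    · rintro ⟨ts', rfl, hf⟩
      rw [(forall₂_map_iff (fun a ha c => ih a ha)).1 hf]
    · rintro rfl
      exact ⟨ts.map embed, rfl, (forall₂_map_iff (fun a ha c => ih a ha)).2 rfl⟩

lemma oisub_embed {us : List (ST Γ Δ Q)} {s : RTree Δ} :
    OISub rsel us (embed s) (embed s) := by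
  induction s using RTree.ind' with
  | h d ts ih =>
    rw [embed_node, oisub_out_iff]
    refine ⟨ts.map embed, rfl, ?_⟩
    rw [List.forall₂_same]
    intro x hx
    obtain ⟨y, hy, rfl⟩ := List.mem_map.1 hx
    exact ih y hy


open RTree

abbrev RM := plainSel rulesSat
abbrev STS := ST GS DS QS
abbrev OTS := OT DS

def pS (i : ℕ) : STS := .node (.param i) []
def pO (i : ℕ) : OTS := .node (.param i) []

def cix (b : Bool) : ℕ := bif b then 1 else 2

lemma substX_node {ss : List (RTree GS)} {l : RLab DS QS} {ts : List (Rhs DS QS)} :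
    substX ss (.node l ts) = .node (l.subst ss) (ts.map (substX ss)) := map_node _ _ _

lemma substX_ytf {ss : List (RTree GS)} {b : Bool} :
    substX ss (ytf b) = pS (cix b) := by
  cases b <;> simp [ytf, yS, substX_node, RLab.subst, pS, cix]

lemma substX_qdRule {ss : List (RTree GS)} {b1 b2 b3 : Bool} :
    substX ss (qdRule b1 b2 b3) =
      .node (.out .or) [pS (cix b1), pS (cix b2), pS (cix b3)] := by
  simp [qdRule, substX_node, RLab.subst, substX_ytf]

lemma substX_qcRule {s1 : RTree GS} {b1 b2 b3 : Bool} :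
    substX [s1] (qcRule b1 b2 b3) =
      .node (.out .and) [.node (.out .or) [pS (cix b1), pS (cix b2), pS (cix b3)],
        .node (.call .q s1) [pS 0, pS 1, pS 2]] := by
  simp [qcRule, substX_node, RLab.subst, substX_ytf, yS, pS]

/-- conditional negation, rhs-level -/
def cnd (b : Bool) : STS := bif b then pS 0 else .node (.out .not) [pS 0]
/-- conditional negation, argument-level -/
def cndW (b : Bool) (uv : STS) : STS := bif b then uv else .node (.out .not) [uv]

lemma substX_qbRule {s1 s2 s3 : RTree GS} {pos : Bool} :
    substX [s1, s2, s3] (qbRule pos) =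
      .node (.call .q s1) [.node (.out .v) [pS 0],
        .node (.call .qc s2) [pS 1, cnd pos],
        .node (.call .qc s3) [pS 2, cnd (!pos)]] := by
  cases pos <;> simp [qbRule, substX_node, RLab.subst, yS, pS, cnd]

lemma substX_q0Rule {s1 : RTree GS} {pos : Bool} :
    substX [s1] (q0Rule pos) =
      .node (.call .q s1) [stOf (varE 1),
        bif pos then stOf (litE (true, 0)) else stOf (litE (false, 0)),
        bif pos then stOf (litE (false, 0)) else stOf (litE (true, 0))] := by
  cases pos <;>
    simp [q0Rule, substX_node, RLab.subst, oeS, stOf_node, varE, litE, stOf, RTree.map]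
      <;> rw [map_node, map_node] <;> simp

lemma substX_param {ss : List (RTree GS)} {i : ℕ} :
    substX ss (.node (.param i) []) = (.node (.param i) [] : STS) := by
  simp [substX_node, RLab.subst]

lemma sem_qc {u1 u2 : STS} {t : OTS} :
    SemOI RM (.node (.call .qc (.node .d [])) [u1, u2]) t ↔
      SemOI RM u1 t ∨ SemOI RM u2 t := by
  rw [semOI_call_iff]
  constructor
  · rintro ⟨r, hr, t₀, h0, hs⟩
    simp only [RM, plainSel, rulesSat, Set.mem_insert_iff, Set.mem_singleton_iff] at hr
    rcases hr with rfl | rfl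
    · rw [substX_param, semOI_param_iff] at h0
      subst h0
      rw [oisub_param_iff] at hs
      obtain ⟨h, hs⟩ := hs
      exact Or.inl hs
    · rw [substX_param, semOI_param_iff] at h0
      subst h0
      rw [oisub_param_iff] at hs
      obtain ⟨h, hs⟩ := hs
      exact Or.inr hs
  · intro h
    rcases h with h | h
    · refine ⟨.node (.param 0) [], Or.inl rfl, .node (.param 0) [], ?_, ?_⟩
      · rw [substX_param]
        exact semOI_param_iff.2 rfl
      · exact oisub_param_iff.2 ⟨by norm_num, h⟩
    · refine ⟨.node (.param 1) [], Or.inr rfl, .node (.param 1) [], ?_, ?_⟩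
      · rw [substX_param]
        exact semOI_param_iff.2 rfl
      · exact oisub_param_iff.2 ⟨by norm_num, h⟩

/-- a clause built from the sets `St` (true literals) and `Sf` (false literals),
with at least one true literal -/
def ClOK (St Sf : Set OTS) (t : OTS) : Prop :=
  ∃ b1 b2 b3 t1 t2 t3, (b1 || b2 || b3) = true ∧
    t1 ∈ (bif b1 then St else Sf) ∧ t2 ∈ (bif b2 then St else Sf) ∧
    t3 ∈ (bif b3 then St else Sf) ∧ t = .node (.out .or) [t1, t2, t3]

/-- a right-nested conjunction of `k+1` good clauses -/
def CL (St Sf : Set OTS) : ℕ → OTS → Prop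
  | 0, t => ClOK St Sf t
  | k+1, t => ∃ c r, ClOK St Sf c ∧ CL St Sf k r ∧ t = .node (.out .and) [c, r]

lemma oisub_cix {uv ut uf : STS} {St Sf : Set OTS}
    (hT : ∀ t, SemOI RM ut t ↔ t ∈ St) (hF : ∀ t, SemOI RM uf t ↔ t ∈ Sf)
    {b : Bool} {t : OTS} :
    OISub RM [uv, ut, uf] (pO (cix b)) t ↔ t ∈ (bif b then St else Sf) := by
  cases b <;> rw [cix, pO, oisub_param_iff] <;> simp only [cond_false, cond_true]
  · constructor
    · rintro ⟨h, hs⟩; exact (hF t).1 hs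
    · intro h; exact ⟨by norm_num, (hF t).2 h⟩
  · constructor
    · rintro ⟨h, hs⟩; exact (hT t).1 hs
    · intro h; exact ⟨by norm_num, (hT t).2 h⟩

lemma sem_q_d {uv ut uf : STS} {St Sf : Set OTS}
    (hT : ∀ t, SemOI RM ut t ↔ t ∈ St) (hF : ∀ t, SemOI RM uf t ↔ t ∈ Sf)
    {t : OTS} :
    SemOI RM (.node (.call .q (.node .d [])) [uv, ut, uf]) t ↔ ClOK St Sf t := by
  rw [semOI_call_iff]
  constructor
  · rintro ⟨r, hr, t₀, h0, hs⟩
    simp only [RM, plainSel, rulesSat, Set.mem_setOf_eq] at hr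
    obtain ⟨b1, b2, b3, hb, rfl⟩ := hr
    rw [substX_qdRule, semOI_out3] at h0
    obtain ⟨a1, a2, a3, ha1, ha2, ha3, rfl⟩ := h0
    rw [pS, semOI_param_iff] at ha1 ha2 ha3
    subst ha1; subst ha2; subst ha3
    rw [oisub_out3] at hs
    obtain ⟨t1, t2, t3, h1, h2, h3, rfl⟩ := hs
    exact ⟨b1, b2, b3, t1, t2, t3, hb, (oisub_cix hT hF).1 h1,
      (oisub_cix hT hF).1 h2, (oisub_cix hT hF).1 h3, rfl⟩
  · rintro ⟨b1, b2, b3, t1, t2, t3, hb, h1, h2, h3, rfl⟩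
    refine ⟨qdRule b1 b2 b3, ?_, .node (.out .or) [pO (cix b1), pO (cix b2), pO (cix b3)], ?_, ?_⟩
    · simp only [RM, plainSel, rulesSat, Set.mem_setOf_eq]
      exact ⟨b1, b2, b3, hb, rfl⟩
    · rw [substX_qdRule, semOI_out3]
      exact ⟨_, _, _, semOI_param_iff.2 rfl, semOI_param_iff.2 rfl, semOI_param_iff.2 rfl, rfl⟩
    · rw [oisub_out3]
      exact ⟨t1, t2, t3, (oisub_cix hT hF).2 h1, (oisub_cix hT hF).2 h2,
        (oisub_cix hT hF).2 h3, rfl⟩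


open RTree

lemma comp_id (i : ℕ) (us : List STS) (h3 : i < us.length) (t' : OTS) :
    (∃ x, SemOI RM (pS i) x ∧ OISub RM us x t') ↔ SemOI RM (us.get ⟨i, h3⟩) t' := by
  constructor
  · rintro ⟨x, hx, hsub⟩
    rw [pS, semOI_param_iff] at hx
    subst hx
    rw [oisub_param_iff] at hsub
    obtain ⟨hh, hsub⟩ := hsub
    exact hsub
  · intro hx
    exact ⟨.node (.param i) [], semOI_param_iff.2 rfl, oisub_param_iff.2 ⟨h3, hx⟩⟩

lemma fuse3 {s : RTree GS} {uv ut uf : STS} {t : OTS} :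
    (∃ t₀, SemOI RM (.node (.call .q s) [pS 0, pS 1, pS 2]) t₀ ∧
        OISub RM [uv, ut, uf] t₀ t) ↔
      SemOI RM (.node (.call .q s) [uv, ut, uf]) t := by
  cases s with
  | node σ ss =>
    refine fuse_gen rfl ?_
    intro i h t'
    match i, h with
    | 0, h => exact comp_id 0 [uv, ut, uf] (by norm_num) t'
    | 1, h => exact comp_id 1 [uv, ut, uf] (by norm_num) t'
    | 2, h => exact comp_id 2 [uv, ut, uf] (by norm_num) t'

lemma sem_q_c {uv ut uf : STS} {St Sf : Set OTS}
    (hT : ∀ t, SemOI RM ut t ↔ t ∈ St) (hF : ∀ t, SemOI RM uf t ↔ t ∈ Sf) :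
    ∀ (k : ℕ) (t : OTS),
    SemOI RM (.node (.call .q (cIter k)) [uv, ut, uf]) t ↔ CL St Sf k t := by
  intro k
  induction k with
  | zero => intro t; exact sem_q_d hT hF
  | succ k ih =>
    intro t
    show SemOI RM (.node (.call .q (.node .c [cIter k])) _) t ↔ _
    rw [semOI_call_iff]
    constructor
    · rintro ⟨r, hr, t₀, h0, hs⟩
      simp only [RM, plainSel, rulesSat, Set.mem_setOf_eq] at hr
      obtain ⟨b1, b2, b3, hb, rfl⟩ := hr
      rw [substX_qcRule, semOI_out2] at h0
      obtain ⟨x1, x2, hx1, hx2, rfl⟩ := h0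
      rw [semOI_out3] at hx1
      obtain ⟨a1, a2, a3, ha1, ha2, ha3, rfl⟩ := hx1
      rw [pS, semOI_param_iff] at ha1 ha2 ha3
      subst ha1; subst ha2; subst ha3
      rw [oisub_out2] at hs
      obtain ⟨w1, w2, hw1, hw2, rfl⟩ := hs
      rw [oisub_out3] at hw1
      obtain ⟨t1, t2, t3, h1, h2, h3, rfl⟩ := hw1
      have hrest : SemOI RM (.node (.call .q (cIter k)) [uv, ut, uf]) w2 :=
        fuse3.1 ⟨x2, hx2, hw2⟩
      exact ⟨_, _, ⟨b1, b2, b3, t1, t2, t3, hb, (oisub_cix hT hF).1 h1,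
        (oisub_cix hT hF).1 h2, (oisub_cix hT hF).1 h3, rfl⟩, (ih w2).1 hrest, rfl⟩
    · rintro ⟨c, rest, ⟨b1, b2, b3, t1, t2, t3, hb, h1, h2, h3, rfl⟩, hrest, rfl⟩
      obtain ⟨x2, hx2, hsub2⟩ := fuse3.2 ((ih rest).2 hrest)
      refine ⟨qcRule b1 b2 b3, ⟨b1, b2, b3, hb, rfl⟩,
        .node (.out .and) [.node (.out .or) [pO (cix b1), pO (cix b2), pO (cix b3)], x2],
        ?_, ?_⟩
      · rw [substX_qcRule, semOI_out2]
        refine ⟨_, _, ?_, hx2, rfl⟩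
        rw [semOI_out3]
        exact ⟨_, _, _, semOI_param_iff.2 rfl, semOI_param_iff.2 rfl,
          semOI_param_iff.2 rfl, rfl⟩
      · rw [oisub_out2]
        refine ⟨_, _, ?_, hsub2, rfl⟩
        rw [oisub_out3]
        exact ⟨t1, t2, t3, (oisub_cix hT hF).2 h1, (oisub_cix hT hF).2 h2,
          (oisub_cix hT hF).2 h3, rfl⟩


open RTree

variable {uv ut uf : STS} {t' : OTS}

lemma comp_out1 (d : DS) :
    (∃ x, SemOI RM (.node (.out d) [pS 0]) x ∧ OISub RM [uv, ut, uf] x t') ↔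
      SemOI RM (.node (.out d) [uv]) t' := by
  constructor
  · rintro ⟨x, hx, hsub⟩
    rw [semOI_out1] at hx
    obtain ⟨x0, hx0, rfl⟩ := hx
    rw [pS, semOI_param_iff] at hx0
    subst hx0
    rw [oisub_out1] at hsub
    obtain ⟨t0, ht0, rfl⟩ := hsub
    rw [oisub_param_iff] at ht0
    obtain ⟨_, ht0⟩ := ht0
    rw [semOI_out1]
    exact ⟨t0, ht0, rfl⟩
  · intro hx
    rw [semOI_out1] at hx
    obtain ⟨t0, h0, rfl⟩ := hx
    refine ⟨.node (.out d) [pO 0], ?_, ?_⟩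
    · rw [semOI_out1]; exact ⟨pO 0, semOI_param_iff.2 rfl, rfl⟩
    · rw [oisub_out1]; exact ⟨t0, oisub_param_iff.2 ⟨by norm_num, h0⟩, rfl⟩

lemma comp_cnd (c : Bool) :
    (∃ x, SemOI RM (cnd c) x ∧ OISub RM [uv, ut, uf] x t') ↔
      SemOI RM (cndW c uv) t' := by
  cases c
  · exact comp_out1 .not
  · exact comp_id 0 [uv, ut, uf] (by norm_num) t'

lemma comp_qcarm (j : ℕ) (hj : j < 3) (c : Bool) :
    (∃ x, SemOI RM (.node (.call .qc (.node .d [])) [pS j, cnd c]) x ∧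
        OISub RM [uv, ut, uf] x t') ↔
      SemOI RM (.node (.call .qc (.node .d []))
        [([uv, ut, uf] : List STS).get ⟨j, hj⟩, cndW c uv]) t' := by
  rw [sem_qc]
  constructor
  · rintro ⟨x, hx, hsub⟩
    rw [sem_qc] at hx
    rcases hx with hx | hx
    · left
      rw [pS, semOI_param_iff] at hx
      subst hx
      rw [oisub_param_iff] at hsub
      obtain ⟨_, hsub⟩ := hsub
      exact hsub
    · right
      exact (comp_cnd c).1 ⟨x, hx, hsub⟩
  · rintro (h | h)
    · exact ⟨pO j, sem_qc.2 (Or.inl (semOI_param_iff.2 rfl)),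
        oisub_param_iff.2 ⟨hj, h⟩⟩
    · obtain ⟨x, hx, hsub⟩ := (comp_cnd c).2 h
      exact ⟨x, sem_qc.2 (Or.inr hx), hsub⟩

lemma fuseB {pos : Bool} {s1 : RTree GS} {t : OTS} :
    (∃ t₀, SemOI RM (.node (.call .q s1)
        [.node (.out .v) [pS 0],
         .node (.call .qc (.node .d [])) [pS 1, cnd pos],
         .node (.call .qc (.node .d [])) [pS 2, cnd (!pos)]]) t₀ ∧
      OISub RM [uv, ut, uf] t₀ t) ↔
    SemOI RM (.node (.call .q s1)
        [.node (.out .v) [uv],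
         .node (.call .qc (.node .d [])) [ut, cndW pos uv],
         .node (.call .qc (.node .d [])) [uf, cndW (!pos) uv]]) t := by
  cases s1 with
  | node σ ss =>
    refine fuse_gen rfl ?_
    intro i h t'
    match i, h with
    | 0, h => exact comp_out1 .v
    | 1, h => exact comp_qcarm 1 (by norm_num) pos
    | 2, h => exact comp_qcarm 2 (by norm_num) (!pos)

/-- true literals over variables `p_i, …, p_{i+k-1}` under `γ` -/
def TL (γ : ℕ → Bool) (i k : ℕ) : Set OTS :=
  {t | ∃ j, i ≤ j ∧ j < i + k ∧ t = embed (litE (γ j, j))}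
/-- false literals over variables `p_i, …, p_{i+k-1}` under `γ` -/
def FL (γ : ℕ → Bool) (i k : ℕ) : Set OTS := TL (fun j => !γ j) i k

lemma TL_zero {γ : ℕ → Bool} {i : ℕ} : TL γ i 0 = ∅ := by
  ext t; simp only [TL, Set.mem_setOf_eq, Set.mem_empty_iff_false, iff_false]
  rintro ⟨j, h1, h2, _⟩; omega

lemma TL_succ {γ : ℕ → Bool} {i k : ℕ} :
    TL γ i (k+1) = insert (embed (litE (γ i, i))) (TL γ (i+1) k) := by
  ext t
  simp only [TL, Set.mem_setOf_eq, Set.mem_insert_iff]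
  constructor
  · rintro ⟨j, h1, h2, rfl⟩
    by_cases hji : j = i
    · subst hji; exact Or.inl rfl
    · exact Or.inr ⟨j, by omega, by omega, rfl⟩
  · rintro (rfl | ⟨j, h1, h2, rfl⟩)
    · exact ⟨i, le_rfl, by omega, rfl⟩
    · exact ⟨j, by omega, by omega, rfl⟩

lemma TL_update {γ : ℕ → Bool} {i k : ℕ} {pos : Bool} :
    TL (Function.update γ i pos) (i+1) k = TL γ (i+1) k := by
  ext t
  simp only [TL, Set.mem_setOf_eq]
  constructor
  · rintro ⟨j, h1, h2, rfl⟩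
    refine ⟨j, h1, h2, ?_⟩
    rw [Function.update_of_ne (by omega)]
  · rintro ⟨j, h1, h2, rfl⟩
    refine ⟨j, h1, h2, ?_⟩
    rw [Function.update_of_ne (by omega)]

lemma TL_shift {γ : ℕ → Bool} {i k : ℕ} {pos : Bool} :
    insert (embed (litE (pos, i))) (TL γ (i+1) k) =
      TL (Function.update γ i pos) i (k+1) := by
  rw [TL_succ, Function.update_self, TL_update]

lemma FL_zero {γ : ℕ → Bool} {i : ℕ} : FL γ i 0 = ∅ := TL_zero

lemma FL_shift {γ : ℕ → Bool} {i k : ℕ} {pos : Bool} :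
    insert (embed (litE (!pos, i))) (FL γ (i+1) k) =
      FL (Function.update γ i pos) i (k+1) := by
  have h : (fun j => !(Function.update γ i pos j)) =
      Function.update (fun j => !γ j) i (!pos) := by
    funext j
    by_cases hji : j = i
    · subst hji; simp
    · rw [Function.update_of_ne hji, Function.update_of_ne hji]
  show _ = TL (fun j => !(Function.update γ i pos j)) i (k+1)
  rw [h]
  exact TL_shift

lemma FL_succ {γ : ℕ → Bool} {i k : ℕ} :
    FL γ i (k+1) = insert (embed (litE (!γ i, i))) (FL γ (i+1) k) :=
  TL_succ (γ := fun j => !γ j)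

lemma embed_varE_succ {i : ℕ} :
    embed (varE (i+1)) = .node (.out .v) [embed (varE i)] := by
  show embed (RTree.node .v [varE i]) = _
  rw [embed_node]; rfl

lemma embed_lit_neg {i : ℕ} :
    embed (litE (false, i)) = .node (.out .not) [embed (varE i)] := by
  show embed (RTree.node .not [varE i]) = _
  rw [embed_node]; rfl

lemma sem_cndW {i : ℕ} (hv : ∀ t, SemOI RM uv t ↔ t = embed (varE i)) (pos : Bool) :
    ∀ t, SemOI RM (cndW pos uv) t ↔ t = embed (litE (pos, i)) := by
  intro t
  cases pos
  · show SemOI RM (.node (.out .not) [uv]) t ↔ _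
    rw [semOI_out1, embed_lit_neg]
    constructor
    · rintro ⟨t1, h1, rfl⟩; rw [(hv t1).1 h1]
    · rintro rfl; exact ⟨embed (varE i), (hv _).2 rfl, rfl⟩
  · exact hv t

lemma sem_q_b {mm : ℕ} : ∀ (k i : ℕ) (uv ut uf : STS) (St Sf : Set OTS)
    (hv : ∀ t, SemOI RM uv t ↔ t = embed (varE i))
    (hT : ∀ t, SemOI RM ut t ↔ t ∈ St) (hF : ∀ t, SemOI RM uf t ↔ t ∈ Sf) (t : OTS),
    SemOI RM (.node (.call .q (bIter k (cIter mm))) [uv, ut, uf]) t ↔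
      ∃ γ : ℕ → Bool, CL (St ∪ TL γ i k) (Sf ∪ FL γ i k) mm t := by
  intro k
  induction k with
  | zero =>
    intro i uv ut uf St Sf hv hT hF t
    show SemOI RM (.node (.call .q (cIter mm)) _) t ↔ _
    rw [sem_q_c hT hF mm t]
    constructor
    · intro h
      exact ⟨fun _ => true, by rwa [TL_zero, FL_zero, Set.union_empty, Set.union_empty]⟩
    · rintro ⟨γ, h⟩
      rwa [TL_zero, FL_zero, Set.union_empty, Set.union_empty] at h
  | succ k ih =>
    intro i uv ut uf St Sf hv hT hF t
    show SemOI RM (.node (.call .q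
      (.node .b [bIter k (cIter mm), .node .d [], .node .d []])) _) t ↔ _
    rw [semOI_call_iff]
    have hv' : ∀ pos : Bool, ∀ t, SemOI RM (.node (.out .v) [uv]) t ↔
        t = embed (varE (i+1)) := by
      intro _ t
      rw [semOI_out1, embed_varE_succ]
      constructor
      · rintro ⟨t1, h1, rfl⟩; rw [(hv t1).1 h1]
      · rintro rfl; exact ⟨embed (varE i), (hv _).2 rfl, rfl⟩
    have hT' : ∀ pos : Bool, ∀ t,
        SemOI RM (.node (.call .qc (.node .d [])) [ut, cndW pos uv]) t ↔
          t ∈ insert (embed (litE (pos, i))) St := by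
      intro pos t
      rw [sem_qc, hT t, sem_cndW hv pos t, Set.mem_insert_iff, or_comm]
    have hF' : ∀ pos : Bool, ∀ t,
        SemOI RM (.node (.call .qc (.node .d [])) [uf, cndW (!pos) uv]) t ↔
          t ∈ insert (embed (litE (!pos, i))) Sf := by
      intro pos t
      rw [sem_qc, hF t, sem_cndW hv (!pos) t, Set.mem_insert_iff, or_comm]
    constructor
    · rintro ⟨r, hr, t₀, h0, hs⟩
      simp only [RM, plainSel, rulesSat, Set.mem_setOf_eq] at hr
      obtain ⟨pos, rfl⟩ := hr
      rw [substX_qbRule] at h0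
      have hfused := fuseB.1 ⟨t₀, h0, hs⟩
      obtain ⟨γ, hγ⟩ := (ih (i+1) _ _ _ _ _ (hv' pos) (hT' pos) (hF' pos) t).1 hfused
      refine ⟨Function.update γ i pos, ?_⟩
      rwa [Set.insert_union, Set.insert_union, ← Set.union_insert, ← Set.union_insert, TL_shift, FL_shift] at hγ
    · rintro ⟨γ, hγ⟩
      rw [show St ∪ TL γ i (k+1) = insert (embed (litE (γ i, i))) St ∪ TL γ (i+1) k from
            by rw [TL_succ, Set.union_insert, ← Set.insert_union],
          show Sf ∪ FL γ i (k+1) = insert (embed (litE (!γ i, i))) Sf ∪ FL γ (i+1) k from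
            by rw [FL_succ, Set.union_insert, ← Set.insert_union]] at hγ
      have hfused := (ih (i+1) _ _ _ _ _ (hv' (γ i)) (hT' (γ i)) (hF' (γ i)) t).2 ⟨γ, hγ⟩
      obtain ⟨t₀, h0, hs⟩ := fuseB.2 hfused
      exact ⟨qbRule (γ i), ⟨γ i, rfl⟩, t₀, by rwa [substX_qbRule], hs⟩


open RTree

lemma list_map_inj {α β : Type} {F : RTree α → RTree β} {l1 l2 : List (RTree α)}
    (h : l1.map F = l2.map F) (hinj : ∀ x ∈ l1, ∀ y, F x = F y → x = y) : l1 = l2 := by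
  induction l1 generalizing l2 with
  | nil => cases l2 <;> simp_all
  | cons a l ih =>
    cases l2 with
    | nil => simp at h
    | cons b l2 =>
      simp only [List.map_cons, List.cons.injEq] at h
      rw [hinj a List.mem_cons_self b h.1,
        ih h.2 (fun x hx y => hinj x (List.mem_cons_of_mem _ hx) y)]

lemma map_inj {α β : Type} {f : α → β} (hf : ∀ x y, f x = f y → x = y) :
    ∀ (t u : RTree α), RTree.map f t = RTree.map f u → t = u := by
  intro t
  induction t using RTree.ind' with
  | h a ts ih =>
    intro u h
    cases u with
    | node b us =>
      rw [map_node, map_node, RTree.node.injEq] at h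
      rw [hf a b h.1, list_map_inj h.2 ih]

lemma embed_inj {s u : RTree DS} (h : embed s = embed u) : s = u :=
  map_inj (fun x y hxy => by cases hxy; rfl) s u h

lemma varE_inj : ∀ i j : ℕ, varE i = varE j → i = j := by
  intro i
  induction i with
  | zero => intro j h; cases j with
    | zero => rfl
    | succ j => simp [varE] at h
  | succ i ih =>
    intro j h
    cases j with
    | zero => simp [varE] at h
    | succ j => simp only [varE, RTree.node.injEq, List.cons.injEq] at h
                exact congrArg Nat.succ (ih j h.2.1)

lemma litE_inj : ∀ l l' : Lit, litE l = litE l' → l = l' := by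
  rintro ⟨b, i⟩ ⟨b', i'⟩ h
  cases b <;> cases b' <;> simp only [litE] at h
  · simp only [RTree.node.injEq, List.cons.injEq] at h
    rw [varE_inj _ _ h.2.1]
  · cases i' <;> simp [varE] at h
  · cases i <;> simp [varE] at h
  · rw [varE_inj _ _ h]

lemma mem_TL_iff {γ : ℕ → Bool} {n : ℕ} {l : Lit} :
    embed (litE l) ∈ TL γ 0 n ↔ l.2 < n ∧ γ l.2 = l.1 := by
  simp only [TL, Set.mem_setOf_eq]
  constructor
  · rintro ⟨j, _, hj, heq⟩
    have := litE_inj _ _ (embed_inj heq)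
    rw [this]
    exact ⟨by simpa using hj, rfl⟩
  · rintro ⟨hl, hg⟩
    refine ⟨l.2, Nat.zero_le _, by omega, ?_⟩
    rw [hg]

lemma mem_FL_iff {γ : ℕ → Bool} {n : ℕ} {l : Lit} :
    embed (litE l) ∈ FL γ 0 n ↔ l.2 < n ∧ γ l.2 = !l.1 := by
  show embed (litE l) ∈ TL _ 0 n ↔ _
  rw [mem_TL_iff]
  constructor
  · rintro ⟨h1, h2⟩; exact ⟨h1, by rw [← h2]; simp⟩
  · rintro ⟨h1, h2⟩; exact ⟨h1, by rw [h2]; simp⟩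

lemma embed_clauseE {cl : Clause} :
    embed (clauseE cl) =
      .node (.out .or) [embed (litE cl.1), embed (litE cl.2.1), embed (litE cl.2.2)] := by
  obtain ⟨l1, l2, l3⟩ := cl
  show embed (RTree.node .or [litE l1, litE l2, litE l3]) = _
  rw [embed_node]; rfl

lemma ClOK_clauseE {γ : ℕ → Bool} {n : ℕ} {cl : Clause}
    (hb : cl.1.2 < n ∧ cl.2.1.2 < n ∧ cl.2.2.2 < n) :
    ClOK (TL γ 0 n) (FL γ 0 n) (embed (clauseE cl)) ↔
      (evalLit γ cl.1 ∨ evalLit γ cl.2.1 ∨ evalLit γ cl.2.2) := by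
  obtain ⟨hb1, hb2, hb3⟩ := hb
  have key : ∀ (l : Lit), l.2 < n → ∀ (b : Bool) (t : OTS), b = true →
      t ∈ (bif b then TL γ 0 n else FL γ 0 n) → t = embed (litE l) → evalLit γ l := by
    rintro l hl b t rfl ht rfl
    exact (mem_TL_iff.1 ht).2
  have mem_any : ∀ (l : Lit), l.2 < n →
      embed (litE l) ∈ (bif (γ l.2 == l.1) then TL γ 0 n else FL γ 0 n) := by
    intro l hl
    by_cases h : γ l.2 = l.1
    · rw [show (γ l.2 == l.1) = true from beq_iff_eq.2 h]
      exact mem_TL_iff.2 ⟨hl, h⟩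
    · rw [show (γ l.2 == l.1) = false from beq_eq_false_iff_ne.2 h]
      refine mem_FL_iff.2 ⟨hl, ?_⟩
      revert h; cases l.1 <;> cases γ l.2 <;> simp
  constructor
  · rintro ⟨b1, b2, b3, t1, t2, t3, hor, h1, h2, h3, heq⟩
    rw [embed_clauseE] at heq
    simp only [RTree.node.injEq, List.cons.injEq, and_true, true_and] at heq
    obtain ⟨e1, e2, e3⟩ := heq
    simp only [Bool.or_eq_true] at hor
    rcases hor with (hb | hb) | hb
    · exact Or.inl (key _ hb1 b1 t1 hb h1 e1.symm)
    · exact Or.inr (Or.inl (key _ hb2 b2 t2 hb h2 e2.symm))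
    · exact Or.inr (Or.inr (key _ hb3 b3 t3 hb h3 e3.symm))
  · intro h
    refine ⟨γ cl.1.2 == cl.1.1, γ cl.2.1.2 == cl.2.1.1, γ cl.2.2.2 == cl.2.2.1,
      embed (litE cl.1), embed (litE cl.2.1), embed (litE cl.2.2), ?_,
      mem_any _ hb1, mem_any _ hb2, mem_any _ hb3, embed_clauseE⟩
    simp only [evalLit] at h
    rcases h with h | h | h <;> simp [beq_iff_eq, h]

lemma CL_encF {γ : ℕ → Bool} {n : ℕ} :
    ∀ (φ : CNF), φ ≠ [] →
      (∀ cl ∈ φ, cl.1.2 < n ∧ cl.2.1.2 < n ∧ cl.2.2.2 < n) →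
      (CL (TL γ 0 n) (FL γ 0 n) (φ.length - 1) (embed (encF φ)) ↔
        ∀ cl ∈ φ, evalLit γ cl.1 ∨ evalLit γ cl.2.1 ∨ evalLit γ cl.2.2) := by
  intro φ
  induction φ with
  | nil => intro h; exact absurd rfl h
  | cons cl cls ih =>
    intro _ hb
    cases cls with
    | nil =>
      show ClOK _ _ (embed (clauseE cl)) ↔ _
      rw [ClOK_clauseE (hb cl List.mem_cons_self)]
      simp
    | cons cl2 rest =>
      show (∃ c r, ClOK _ _ c ∧ CL _ _ ((cl2 :: rest).length - 1) r ∧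
        embed (encF (cl :: cl2 :: rest)) = .node (.out .and) [c, r]) ↔ _
      have henc : embed (encF (cl :: cl2 :: rest)) =
          .node (.out .and) [embed (clauseE cl), embed (encF (cl2 :: rest))] := by
        show embed (RTree.node .and [clauseE cl, encF (cl2 :: rest)]) = _
        rw [embed_node]; rfl
      constructor
      · rintro ⟨c, r, hc, hr, heq⟩
        rw [henc] at heq
        simp only [RTree.node.injEq, List.cons.injEq, and_true, true_and] at heq
        obtain ⟨e1, e2⟩ := heq
        rw [← e1] at hc
        rw [← e2] at hr
        intro cl' hcl'
        rcases List.mem_cons.1 hcl' with rfl | hcl'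
        · exact (ClOK_clauseE (hb cl' List.mem_cons_self)).1 hc
        · exact (ih (by simp) (fun c hc => hb c (List.mem_cons_of_mem _ hc))).1 hr cl' hcl'
      · intro h
        refine ⟨embed (clauseE cl), embed (encF (cl2 :: rest)),
          (ClOK_clauseE (hb cl List.mem_cons_self)).2 (h cl List.mem_cons_self),
          (ih (by simp) (fun c hc => hb c (List.mem_cons_of_mem _ hc))).2
            (fun c hc => h c (List.mem_cons_of_mem _ hc)), henc⟩


open RTree

lemma wf_cIter : ∀ k, (cIter k).Wf rkGS
  | 0 => .node (by simp [cIter, rkGS]) (by simp [cIter])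
  | k+1 => .node (by simp [cIter, rkGS]) (by
      intro t ht
      simp only [cIter, List.mem_singleton] at ht
      subst ht; exact wf_cIter k)

lemma wf_bIter : ∀ (k : ℕ) {t : RTree GS}, t.Wf rkGS → (bIter k t).Wf rkGS
  | 0, t, h => h
  | k+1, t, h => .node (by simp [bIter, rkGS]) (by
      rintro u hu
      simp only [bIter, List.mem_cons, List.mem_singleton] at hu
      rcases hu with rfl | rfl | (rfl | h')
      · exact wf_bIter k h
      · exact .node (by simp [rkGS]) (by simp)
      · exact .node (by simp [rkGS]) (by simp)
      · exact absurd h' (by simp))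

lemma wf_sNM {n m : ℕ} : (sNM n m).Wf rkGS :=
  .node (by simp [sNM, rkGS]) (by
    intro t ht
    simp only [sNM, List.mem_singleton] at ht
    subst ht
    exact wf_bIter _ (wf_cIter _))

lemma wf_varE : ∀ i, (varE i).Wf rkDS
  | 0 => .node (by simp [varE, rkDS]) (by simp [varE])
  | i+1 => .node (by simp [varE, rkDS]) (by
      intro t ht
      simp only [varE, List.mem_singleton] at ht
      subst ht; exact wf_varE i)

lemma wf_litE (l : Lit) : (litE l).Wf rkDS := by
  obtain ⟨b, i⟩ := l
  cases b
  · exact .node (by simp [litE, rkDS]) (by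
      intro t ht
      simp only [litE, List.mem_singleton] at ht
      subst ht; exact wf_varE i)
  · exact wf_varE i

lemma wf_clauseE (cl : Clause) : (clauseE cl).Wf rkDS := by
  obtain ⟨l1, l2, l3⟩ := cl
  refine .node (by simp [clauseE, rkDS]) ?_
  intro t ht
  simp only [clauseE, List.mem_cons, List.mem_singleton] at ht
  rcases ht with rfl | rfl | (rfl | h')
  · exact wf_litE l1
  · exact wf_litE l2
  · exact wf_litE l3
  · exact absurd h' (by simp)

lemma wf_encF : ∀ φ : CNF, (encF φ).Wf rkDS := by
  intro φ
  induction φ with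
  | nil => exact .node (by simp [encF, rkDS]) (by simp [encF])
  | cons cl cls ih =>
    cases cls with
    | nil => exact wf_clauseE cl
    | cons cl2 rest =>
      refine .node (by simp [encF, rkDS]) ?_
      intro t ht
      simp only [encF, List.mem_cons, List.mem_singleton] at ht
      rcases ht with rfl | rfl | h'
      · exact wf_clauseE cl
      · exact ih
      · exact absurd h' (by simp)


open RTree

theorem Msat_main (n m : ℕ) (hn : 1 ≤ n) (hm : 1 ≤ m)
    (φ : CNF) (hφ : goodCNF n m φ) :
    (sNM n m, encF φ) ∈ tauOI rkGS rkDS (plainSel rulesSat) QS.q0 ↔ Satisfiable φ := by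
  have hφne : φ ≠ [] := by
    intro h; subst h
    have := hφ.1
    simp at this
    omega
  have hsets : ∀ pos : Bool,
      (∀ t, SemOI RM (stOf (varE 1) : STS) t ↔ t = embed (varE 1)) ∧
      (∀ t, SemOI RM ((bif pos then stOf (litE (true, 0)) else stOf (litE (false, 0))) : STS) t ↔
        t ∈ ({embed (litE (pos, 0))} : Set OTS)) ∧
      (∀ t, SemOI RM ((bif pos then stOf (litE (false, 0)) else stOf (litE (true, 0))) : STS) t ↔
        t ∈ ({embed (litE (!pos, 0))} : Set OTS)) := by
    intro pos
    refine ⟨fun t => sem_stOf, ?_, ?_⟩ <;> cases pos <;> intro t <;>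
      simp only [cond_true, cond_false, Bool.not_true, Bool.not_false,
        Set.mem_singleton_iff] <;> exact sem_stOf
  constructor
  · rintro ⟨-, -, hsem⟩
    have hsem' : SemOI RM
        (.node (.call .q0 (.node .a [bIter (n-1) (cIter (m-1))])) []) (embed (encF φ)) := hsem
    rw [semOI_call_iff] at hsem'
    obtain ⟨r, hr, t₀, h0, hs⟩ := hsem'
    simp only [RM, plainSel, rulesSat, Set.mem_setOf_eq] at hr
    obtain ⟨pos, rfl⟩ := hr
    have ht₀ := oisub_nil hs
    subst ht₀
    rw [substX_q0Rule] at h0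
    obtain ⟨hv, hT, hF⟩ := hsets pos
    obtain ⟨γ, hγ⟩ := (sem_q_b (n-1) 1 _ _ _ _ _ hv hT hF _).1 h0
    rw [Set.singleton_union, Set.singleton_union, TL_shift, FL_shift,
      Nat.sub_add_cancel hn, ← hφ.1] at hγ
    exact ⟨Function.update γ 0 pos, (CL_encF φ hφne hφ.2).1 hγ⟩
  · rintro ⟨γ, hγ⟩
    refine ⟨wf_sNM, wf_encF φ, ?_⟩
    show SemOI RM (.node (.call .q0 (.node .a [bIter (n-1) (cIter (m-1))])) []) (embed (encF φ))
    rw [semOI_call_iff]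
    refine ⟨q0Rule (γ 0), ⟨γ 0, rfl⟩, embed (encF φ), ?_, oisub_embed⟩
    rw [substX_q0Rule]
    obtain ⟨hv, hT, hF⟩ := hsets (γ 0)
    refine (sem_q_b (n-1) 1 _ _ _ _ _ hv hT hF _).2 ⟨γ, ?_⟩
    rw [Set.singleton_union, Set.singleton_union, TL_shift, FL_shift,
      Function.update_eq_self, Nat.sub_add_cancel hn, ← hφ.1]
    exact (CL_encF φ hφne hφ.2).2 hγ



/-- For every 3-CNF formula `φ` over the variables `p_0,…,p_{n−1}`
with exactly `m` clauses (`n, m ≥ 1`), the pair `(s_{n,m}, enc(φ))` belongs to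
`τ_{OI,M_sat}` if and only if `φ` is satisfiable. -/
theorem translation_membership_Msat_iff_sat (n m : ℕ) (hn : 1 ≤ n) (hm : 1 ≤ m)
    (φ : CNF) (hφ : goodCNF n m φ) :
    (sNM n m, encF φ) ∈ tauOI rkGS rkDS (plainSel rulesSat) QS.q0 ↔ Satisfiable φ := by
  exact Msat_main n m hn hm φ hφ

end MttF
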